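/- Let $S$ be a polynomial ring over a field with a monomial order $<$, let $I_1,\ldots,I_r\subset S$ be ideals with supporting sets of variables $X_1,\ldots,X_r$ which are pairwise disjoint, and let $f_1,\ldots,f_r\in S$ with $\mathrm{supp}(f_j)\subset X_j$ and $f_j\notin I_j$ for each $j$. Then $\prod_{j=1}^r f_j\notin \sum_{j=1}^r I_j$. -/

import Mathlib

open MvPolynomial

namespace Stmt14Aux

variable {K σ : Type} [Field K]

theorem exists_dual {V : Type*} [AddCommGroup V] [Module K V]
    (W : Submodule K V) (v : V) (hv : v ∉ W) :
    ∃ φ : V →ₗ[K] K, (∀ w ∈ W, φ w = 0) ∧ φ v = 1 := by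
  have h0 : W.mkQ v ≠ 0 := by
    rw [Submodule.mkQ_apply, ne_eq, Submodule.Quotient.mk_eq_zero]; exact hv
  have h1 : ¬ ∀ ψ : Module.Dual K (V ⧸ W), ψ (W.mkQ v) = 0 := by
    rw [Module.forall_dual_apply_eq_zero_iff]; exact h0
  obtain ⟨ψ, hψ⟩ := not_forall.mp h1
  refine ⟨(ψ (W.mkQ v))⁻¹ • (ψ.comp W.mkQ), fun w hw => ?_, ?_⟩
  · have : W.mkQ w = 0 := by
      rw [Submodule.mkQ_apply, Submodule.Quotient.mk_eq_zero]; exact hw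
    simp [this]
  · simpa using inv_mul_cancel₀ hψ

variable {r : ℕ} (Xs : Fin r → Set σ) (lam : Fin r → (MvPolynomial σ K →ₗ[K] K))

open Classical in
noncomputable def cf (s : Finset (Fin r)) (m : σ →₀ ℕ) : K :=
  if (↑m.support : Set σ) ⊆ ⋃ j ∈ s, Xs j then
    ∏ j ∈ s, lam j (monomial (m.filter (· ∈ Xs j)) 1)
  else 0

noncomputable def L (s : Finset (Fin r)) : MvPolynomial σ K →ₗ[K] K :=
  (Finsupp.lsum K fun m => LinearMap.toSpanSingleton K K (cf Xs lam s m)) ∘ₗ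
    (AddMonoidAlgebra.coeffLinearEquiv K).toLinearMap

theorem L_monomial (s : Finset (Fin r)) (m : σ →₀ ℕ) (a : K) :
    L Xs lam s (monomial m a) = a * cf Xs lam s m := by
  rw [L, ← single_eq_monomial, LinearMap.comp_apply]
  exact (Finsupp.lsum_single K _ m a).trans (smul_eq_mul _ _)

end Stmt14Aux

namespace Stmt14Aux

variable {K σ : Type} [Field K] {r : ℕ} (Xs : Fin r → Set σ)
  (lam : Fin r → (MvPolynomial σ K →ₗ[K] K))

theorem cf_add (hdisj : Pairwise (Function.onFun Disjoint Xs))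
    {s : Finset (Fin r)} {j : Fin r} (hj : j ∈ s) {m n : σ →₀ ℕ}
    (hm : (↑m.support : Set σ) ⊆ Xs j) (hn : Disjoint (↑n.support : Set σ) (Xs j)) :
    cf Xs lam s (m + n) = lam j (monomial m 1) * cf Xs lam (s.erase j) n := by
  classical
  have hdis : Disjoint m.support n.support := by
    rw [Finset.disjoint_left]
    intro x hxm hxn
    exact Set.disjoint_left.mp hn (by exact_mod_cast hxn) (hm (by exact_mod_cast hxm))
  have hsupp : (m + n).support = m.support ∪ n.support := Finsupp.support_add_eq hdis
  have hunion : (⋃ i ∈ s, Xs i) = Xs j ∪ ⋃ i ∈ s.erase j, Xs i := by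
    conv_lhs => rw [← Finset.insert_erase hj]
    rw [Finset.set_biUnion_insert]
  have hcond : ((↑(m + n).support : Set σ) ⊆ ⋃ i ∈ s, Xs i) ↔
      ((↑n.support : Set σ) ⊆ ⋃ i ∈ s.erase j, Xs i) := by
    rw [hsupp, Finset.coe_union, Set.union_subset_iff, hunion]
    constructor
    · rintro ⟨-, h2⟩ x hx
      rcases h2 hx with hx' | hx'
      · exact absurd hx' (Set.disjoint_left.mp hn hx)
      · exact hx'
    · intro h
      refine ⟨fun x hx => ?_, fun x hx => Set.mem_union_right _ (h hx)⟩
      exact Set.mem_union_left _ (hm hx)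
  have hfm : m.filter (· ∈ Xs j) = m := by
    rw [Finsupp.filter_eq_self_iff]
    intro x hx
    exact hm (by simpa using Finsupp.mem_support_iff.mpr hx)
  have hfn : n.filter (· ∈ Xs j) = 0 := by
    rw [Finsupp.filter_eq_zero_iff]
    intro x hx
    by_contra hnx
    exact Set.disjoint_left.mp hn (by simpa using Finsupp.mem_support_iff.mpr hnx) hx
  by_cases hc : (↑n.support : Set σ) ⊆ ⋃ i ∈ s.erase j, Xs i
  · rw [cf, if_pos (hcond.mpr hc), cf, if_pos hc, ← Finset.mul_prod_erase s _ hj]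
    congr 1
    · rw [Finsupp.filter_add, hfm, hfn, add_zero]
    · refine Finset.prod_congr rfl fun i hi => ?_
      have hij : i ≠ j := Finset.ne_of_mem_erase hi
      have hfmi : m.filter (· ∈ Xs i) = 0 := by
        rw [Finsupp.filter_eq_zero_iff]
        intro x hx
        by_contra hmx
        exact Set.disjoint_left.mp (hdisj hij) hx
          (hm (by simpa using Finsupp.mem_support_iff.mpr hmx))
      rw [Finsupp.filter_add, hfmi, zero_add]
  · rw [cf, if_neg (fun h => hc (hcond.mp h)), cf, if_neg hc, mul_zero]

theorem L_mul (hdisj : Pairwise (Function.onFun Disjoint Xs))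
    {s : Finset (Fin r)} {j : Fin r} (hj : j ∈ s) {p q : MvPolynomial σ K}
    (hp : (↑p.vars : Set σ) ⊆ Xs j) (hq : Disjoint (↑q.vars : Set σ) (Xs j)) :
    L Xs lam s (p * q) = lam j p * L Xs lam (s.erase j) q := by
  classical
  conv_lhs => rw [as_sum p, as_sum q, Finset.sum_mul_sum]
  rw [map_sum]
  have key : ∀ m ∈ p.support, ∀ n ∈ q.support,
      L Xs lam s (monomial m (coeff m p) * monomial n (coeff n q)) =
        (coeff m p * lam j (monomial m 1)) * (coeff n q * cf Xs lam (s.erase j) n) := by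
    intro m hm n hn
    have hmX : (↑m.support : Set σ) ⊆ Xs j := by
      intro x hx
      exact hp (by exact_mod_cast (mem_vars x).mpr ⟨m, hm, by exact_mod_cast hx⟩)
    have hnX : Disjoint (↑n.support : Set σ) (Xs j) := by
      refine Set.disjoint_left.mpr fun x hx => ?_
      exact Set.disjoint_left.mp hq ((mem_vars x).mpr ⟨n, hn, by exact_mod_cast hx⟩)
    rw [monomial_mul, L_monomial, cf_add Xs lam hdisj hj hmX hnX]
    ring
  calc ∑ m ∈ p.support, L Xs lam s (∑ n ∈ q.support,
          monomial m (coeff m p) * monomial n (coeff n q))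
      = ∑ m ∈ p.support, ∑ n ∈ q.support,
          (coeff m p * lam j (monomial m 1)) * (coeff n q * cf Xs lam (s.erase j) n) := by
        refine Finset.sum_congr rfl fun m hm => ?_
        rw [map_sum]
        exact Finset.sum_congr rfl fun n hn => key m hm n hn
    _ = (∑ m ∈ p.support, coeff m p * lam j (monomial m 1)) *
          (∑ n ∈ q.support, coeff n q * cf Xs lam (s.erase j) n) := by
        rw [Finset.sum_mul_sum]
    _ = lam j p * L Xs lam (s.erase j) q := by
        have h1 : (∑ m ∈ p.support, coeff m p * lam j (monomial m 1)) = lam j p := by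
          conv_rhs => rw [as_sum p, map_sum]
          refine Finset.sum_congr rfl fun m hm => ?_
          have : (monomial m) (coeff m p) = coeff m p • (monomial m 1) := by
            rw [smul_monomial, smul_eq_mul, mul_one]
          rw [this, map_smul, smul_eq_mul]
        have h2 : (∑ n ∈ q.support, coeff n q * cf Xs lam (s.erase j) n) =
            L Xs lam (s.erase j) q := by
          conv_rhs => rw [as_sum q, map_sum]
          exact Finset.sum_congr rfl fun n hn => (L_monomial Xs lam _ n _).symm
        rw [h1, h2]

end Stmt14Aux

namespace Stmt14Aux

variable {K σ : Type} [Field K] {r : ℕ} (Xs : Fin r → Set σ)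
  (lam : Fin r → (MvPolynomial σ K →ₗ[K] K))

theorem L_prod (hdisj : Pairwise (Function.onFun Disjoint Xs))
    (f : Fin r → MvPolynomial σ K) (hsupp : ∀ j, (↑(f j).vars : Set σ) ⊆ Xs j)
    (s : Finset (Fin r)) : L Xs lam s (∏ j ∈ s, f j) = ∏ j ∈ s, lam j (f j) := by
  classical
  induction s using Finset.induction_on with
  | empty =>
    rw [Finset.prod_empty, Finset.prod_empty]
    have h1 : (1 : MvPolynomial σ K) = monomial 0 1 := by rw [monomial_zero', C_1]
    rw [h1, L_monomial, one_mul, cf, if_pos (by simp)]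
    simp
  | insert j s hj ih =>
    rw [Finset.prod_insert hj, Finset.prod_insert hj]
    have hq : Disjoint (↑(∏ i ∈ s, f i).vars : Set σ) (Xs j) := by
      refine Set.disjoint_left.mpr fun x hx hxj => ?_
      have hx' : x ∈ (∏ i ∈ s, f i).vars := by exact_mod_cast hx
      obtain ⟨i, hi, hxi⟩ := Finset.mem_biUnion.mp (vars_prod f hx')
      have hij : i ≠ j := fun h => hj (h ▸ hi)
      exact Set.disjoint_left.mp (hdisj hij) (hsupp i (by exact_mod_cast hxi)) hxj
    rw [L_mul Xs lam hdisj (Finset.mem_insert_self j s) (hsupp j) hq,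
      Finset.erase_insert hj, ih]

end Stmt14Aux


open Stmt14Aux

/-- Let `S = K[σ]` with a monomial order, let `I₁, …, I_r` be ideals supported in
pairwise disjoint sets of variables `X₁, …, X_r`, and `f₁, …, f_r` polynomials with
`supp(f_j) ⊆ X_j` and `f_j ∉ I_j`. Then `∏ f_j ∉ Σ I_j`. -/
theorem stmt14 (K σ : Type) [Field K] (mo : MonomialOrder σ) (r : ℕ)
    (Xs : Fin r → Set σ) (hdisj : Pairwise (Function.onFun Disjoint Xs))
    (I : Fin r → Ideal (MvPolynomial σ K))
    (hI : ∀ j, ∃ G : Set (MvPolynomial σ K),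
      (∀ g ∈ G, ↑g.vars ⊆ Xs j) ∧ I j = Ideal.span G)
    (f : Fin r → MvPolynomial σ K)
    (hsupp : ∀ j, ↑(f j).vars ⊆ Xs j) (hf : ∀ j, f j ∉ I j) :
    (∏ j, f j) ∉ (⨆ j, I j : Ideal (MvPolynomial σ K)) := by
  classical
  intro hmem
  choose G hGvars hGspan using hI
  have hlamex : ∀ j, ∃ φ : MvPolynomial σ K →ₗ[K] K,
      (∀ w ∈ (I j).restrictScalars K, φ w = 0) ∧ φ (f j) = 1 :=
    fun j => exists_dual _ _ (by simpa using hf j)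
  choose lam hlam0 hlam1 using hlamex
  let gens : Set (MvPolynomial σ K) :=
    {x : MvPolynomial σ K | ∃ j : Fin r, ∃ m : σ →₀ ℕ, ∃ g,
      g ∈ G j ∧ x = monomial m 1 * g}
  let N : Submodule K (MvPolynomial σ K) := Submodule.span K gens
  have hNmul : ∀ (p : MvPolynomial σ K), ∀ x ∈ N, p * x ∈ N := by
    intro p x hx
    refine Submodule.span_induction (fun y hy => ?_) (by rw [mul_zero]; exact N.zero_mem)
      (fun a b _ _ ha hb => by rw [mul_add]; exact N.add_mem ha hb)
      (fun a y _ hy => by rw [mul_smul_comm]; exact N.smul_mem _ hy) hx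
    obtain ⟨j, m, g, hg, rfl⟩ := hy
    have hrw : p * (monomial m 1 * g) =
        ∑ u ∈ p.support, coeff u p • (monomial (u + m) 1 * g) := by
      conv_lhs => rw [as_sum p]
      rw [Finset.sum_mul]
      refine Finset.sum_congr rfl fun u hu => ?_
      rw [← mul_assoc, monomial_mul, mul_one, ← smul_mul_assoc]
      congr 1
      rw [smul_monomial, smul_eq_mul, mul_one]
    rw [hrw]
    exact Submodule.sum_mem _ fun u _ =>
      N.smul_mem _ (Submodule.subset_span ⟨j, u + m, g, hg, rfl⟩)
  let J : Ideal (MvPolynomial σ K) :=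
    { carrier := N
      add_mem' := fun ha hb => N.add_mem ha hb
      zero_mem' := N.zero_mem
      smul_mem' := fun c x hx => by simpa [smul_eq_mul] using hNmul c x hx }
  have hsupJ : (⨆ j, I j : Ideal (MvPolynomial σ K)) ≤ J := by
    refine iSup_le fun j => ?_
    rw [hGspan j]
    refine Ideal.span_le.mpr fun g hg => ?_
    exact Submodule.subset_span ⟨j, 0, g, hg, by rw [monomial_zero', C_1, one_mul]⟩
  have hkill : ∀ x ∈ N, L Xs lam Finset.univ x = 0 := by
    intro x hx
    refine Submodule.span_induction (fun y hy => ?_) (map_zero _)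
      (fun a b _ _ ha hb => by rw [map_add, ha, hb, add_zero])
      (fun a y _ hy => by rw [map_smul, hy, smul_zero]) hx
    obtain ⟨j, m, g, hg, rfl⟩ := hy
    set m1 := m.filter (· ∈ Xs j) with hm1
    set m2 := m.filter (fun a => ¬ a ∈ Xs j) with hm2
    have hsplit : m1 + m2 = m := Finsupp.filter_pos_add_filter_neg m _
    have heq : monomial m 1 * g = (monomial m1 1 * g) * monomial m2 1 := by
      have h' : (monomial m1 1 : MvPolynomial σ K) * monomial m2 1 = monomial m 1 := by
        rw [monomial_mul, mul_one, hsplit]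
      rw [← h', mul_right_comm]
    have hgI : g ∈ I j := by rw [hGspan j]; exact Ideal.subset_span hg
    have hp1 : (↑(monomial m1 1 * g).vars : Set σ) ⊆ Xs j := by
      intro x hx'
      have hx'' : x ∈ (monomial m1 1 * g).vars := by exact_mod_cast hx'
      rcases Finset.mem_union.mp (vars_mul (monomial m1 1) g hx'') with h | h
      · rw [vars_monomial one_ne_zero] at h
        have := Finsupp.support_filter (p := (· ∈ Xs j)) (f := m) ▸ h
        exact (Finset.mem_filter.mp this).2
      · exact hGvars j g hg (by exact_mod_cast h)
    have hp2 : Disjoint (↑(monomial m2 (1:K)).vars : Set σ) (Xs j) := by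
      refine Set.disjoint_left.mpr fun x hx' hxj => ?_
      have hx'' : x ∈ (monomial m2 (1:K)).vars := by exact_mod_cast hx'
      rw [vars_monomial one_ne_zero] at hx''
      have := Finsupp.support_filter (p := fun a => ¬ a ∈ Xs j) (f := m) ▸ hx''
      exact (Finset.mem_filter.mp this).2 hxj
    rw [heq, L_mul Xs lam hdisj (Finset.mem_univ j) hp1 hp2,
      hlam0 j _ (by simpa using Ideal.mul_mem_left (I j) (monomial m1 1) hgI), zero_mul]
  have hone : L Xs lam Finset.univ (∏ j, f j) = 1 := by
    rw [L_prod Xs lam hdisj f hsupp Finset.univ]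
    simp [hlam1]
  have h0 : L Xs lam Finset.univ (∏ j, f j) = 0 := hkill _ (hsupJ hmem)
  rw [hone] at h0
  exact one_ne_zero h0
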